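/- Fix q > 1 and positive nonincreasing sequences {y_j}, {z_j}. Among all nonnegative nonincreasing n-tuples (x_1,…,x_n) with ∑_{j=1}^n x_j y_j = 1, the maximum of ∑_{j=1}^n x_j^q z_j is attained at a tuple of the form x_1 = … = x_k = (∑_{j=1}^k y_j)^{−1}, x_{k+1} = … = x_n = 0 for some 1 ≤ k ≤ n, and hence equals max_{1≤k≤n} (∑_{j=1}^k z_j)(∑_{j=1}^k y_j)^{−q}. -/

import Mathlib

open Finset

/-- The extremal problem in the proof of Proposition 2.1: for `q > 1` and positive
nonincreasing `y, z`, the maximum of `∑ xⱼ^q zⱼ` over nonnegative nonincreasing tuples `x`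
with `∑ xⱼ yⱼ = 1` equals `max_{1≤k≤n} (∑_{j≤k} zⱼ)(∑_{j≤k} yⱼ)^(-q)`, and it is attained
at a tuple of the form `x₁ = … = x_k = (∑_{j≤k} yⱼ)⁻¹`, `x_{k+1} = … = xₙ = 0`. -/
theorem extremal_problem (n : ℕ) (hn : 1 ≤ n) (q : ℝ) (hq : 1 < q)
    (y z : ℕ → ℝ)
    (hy : ∀ j, j < n → 0 < y j) (hz : ∀ j, j < n → 0 < z j)
    (hym : ∀ i j, i ≤ j → j < n → y j ≤ y i)
    (hzm : ∀ i j, i ≤ j → j < n → z j ≤ z i) :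
    IsGreatest {S : ℝ | ∃ x : ℕ → ℝ,
        (∀ j, j < n → 0 ≤ x j) ∧
        (∀ i j, i ≤ j → j < n → x j ≤ x i) ∧
        (∑ j ∈ range n, x j * y j) = 1 ∧
        S = ∑ j ∈ range n, x j ^ q * z j}
      ((Finset.Icc 1 n).sup' (Finset.nonempty_Icc.mpr hn)
        (fun k => (∑ j ∈ range k, z j) * (∑ j ∈ range k, y j) ^ (-q))) ∧
    ∃ k : ℕ, 1 ≤ k ∧ k ≤ n ∧
      (∑ j ∈ range n,
          (if j < k then (∑ i ∈ range k, y i)⁻¹ else 0) ^ q * z j) =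
        (Finset.Icc 1 n).sup' (Finset.nonempty_Icc.mpr hn)
          (fun k => (∑ j ∈ range k, z j) * (∑ j ∈ range k, y j) ^ (-q)) := by
  set Y : ℕ → ℝ := fun k => ∑ j ∈ range k, y j with hYdef
  set Z : ℕ → ℝ := fun k => ∑ j ∈ range k, z j with hZdef
  set M : ℝ := (Finset.Icc 1 n).sup' (Finset.nonempty_Icc.mpr hn)
      (fun k => Z k * Y k ^ (-q)) with hMdef
  have hq0 : q ≠ 0 := by positivity
  have hY : ∀ k, 1 ≤ k → k ≤ n → 0 < Y k := by
    intro k hk1 hkn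
    apply Finset.sum_pos
    · intro j hj
      exact hy j (lt_of_lt_of_le (mem_range.mp hj) hkn)
    · exact nonempty_range_iff.mpr (by omega)
  -- key computation for step tuples
  have step_sum : ∀ k, 1 ≤ k → k ≤ n →
      (∑ j ∈ range n, (if j < k then (Y k)⁻¹ else 0) ^ q * z j) = Z k * Y k ^ (-q) := by
    intro k hk1 hkn
    have hYk := hY k hk1 hkn
    rw [← Finset.sum_range_add_sum_Ico _ hkn]
    have h1 : (∑ j ∈ range k, (if j < k then (Y k)⁻¹ else 0) ^ q * z j)
        = (Y k)⁻¹ ^ q * Z k := by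
      rw [hZdef, Finset.mul_sum]
      refine Finset.sum_congr rfl fun j hj => ?_
      rw [if_pos (mem_range.mp hj)]
    have h2 : (∑ j ∈ Ico k n, (if j < k then (Y k)⁻¹ else 0) ^ q * z j) = 0 := by
      refine Finset.sum_eq_zero fun j hj => ?_
      rw [if_neg (by exact not_lt.mpr (mem_Ico.mp hj).1), Real.zero_rpow hq0, zero_mul]
    rw [h1, h2, add_zero, Real.inv_rpow hYk.le, ← Real.rpow_neg hYk.le, mul_comm]
  -- attainment part
  obtain ⟨k₀, hk₀mem, hk₀⟩ := Finset.exists_mem_eq_sup' (Finset.nonempty_Icc.mpr hn)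
      (fun k => Z k * Y k ^ (-q))
  obtain ⟨hk₀1, hk₀n⟩ := Finset.mem_Icc.mp hk₀mem
  have hattain : (∑ j ∈ range n,
      (if j < k₀ then (Y k₀)⁻¹ else 0) ^ q * z j) = M := by
    rw [step_sum k₀ hk₀1 hk₀n, hMdef, hk₀]
  refine ⟨⟨⟨fun j => if j < k₀ then (Y k₀)⁻¹ else 0, ?_, ?_, ?_, hattain.symm⟩, ?_⟩,
    k₀, hk₀1, hk₀n, hattain⟩
  · intro j _
    dsimp only
    split
    · exact inv_nonneg.mpr (hY k₀ hk₀1 hk₀n).le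
    · exact le_refl 0
  · intro i j hij hjn
    dsimp only
    by_cases hjk : j < k₀
    · rw [if_pos hjk, if_pos (lt_of_le_of_lt hij hjk)]
    · rw [if_neg hjk]
      split
      · exact inv_nonneg.mpr (hY k₀ hk₀1 hk₀n).le
      · exact le_refl 0
  · -- constraint
    rw [← Finset.sum_range_add_sum_Ico _ hk₀n]
    have h1 : (∑ j ∈ range k₀, (if j < k₀ then (Y k₀)⁻¹ else 0) * y j) = (Y k₀)⁻¹ * Y k₀ := by
      rw [hYdef, Finset.mul_sum]
      refine Finset.sum_congr rfl fun j hj => ?_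
      rw [if_pos (mem_range.mp hj)]
    have h2 : (∑ j ∈ Ico k₀ n, (if j < k₀ then (Y k₀)⁻¹ else 0) * y j) = 0 := by
      refine Finset.sum_eq_zero fun j hj => ?_
      rw [if_neg (not_lt.mpr (mem_Ico.mp hj).1), zero_mul]
    rw [h1, h2, add_zero, inv_mul_cancel₀ (hY k₀ hk₀1 hk₀n).ne']
  -- upper bound part
  rintro S ⟨x, hx0, hxm, hsum, rfl⟩
  set X : ℕ → ℝ := fun j => if j < n then x j else 0 with hXdef
  set d : ℕ → ℝ := fun k => X k - X (k + 1) with hddef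
  set c : ℕ → ℝ := fun k => d k * Y (k + 1) with hcdef
  set u : ℕ → ℕ → ℝ := fun k j => if j < k + 1 then (Y (k + 1))⁻¹ else 0 with hudef
  have hX0 : ∀ j, 0 ≤ X j := by
    intro j
    simp only [hXdef]
    split
    · exact hx0 j (by assumption)
    · exact le_refl 0
  have hd0 : ∀ k, 0 ≤ d k := by
    intro k
    have hgoal : X (k + 1) ≤ X k → 0 ≤ d k := fun h => by
      simp only [hddef, sub_nonneg]; exact h
    apply hgoal
    by_cases hk : k + 1 < n
    · have h1 : X (k + 1) = x (k + 1) := if_pos hk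
      have h2 : X k = x k := if_pos (by omega)
      rw [h1, h2]
      exact hxm k (k + 1) (Nat.le_succ k) hk
    · have h1 : X (k + 1) = 0 := if_neg hk
      rw [h1]
      exact hX0 k
  have hc0 : ∀ k, k < n → 0 ≤ c k := fun k hk =>
    mul_nonneg (hd0 k) (hY (k + 1) (by omega) (by omega)).le
  have hXn : X n = 0 := by simp [hXdef]
  have htel : ∀ j, j ≤ n → (∑ k ∈ Ico j n, d k) = X j := by
    intro j hjn
    rw [Finset.sum_Ico_eq_sum_range]
    calc (∑ i ∈ range (n - j), d (j + i))
        = ∑ i ∈ range (n - j), ((fun i => X (j + i)) i - (fun i => X (j + i)) (i + 1)) := by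
          refine Finset.sum_congr rfl fun i _ => ?_
          simp only [hddef]
          rfl
      _ = X (j + 0) - X (j + (n - j)) := Finset.sum_range_sub' (fun i => X (j + i)) (n - j)
      _ = X j := by
          rw [add_zero, Nat.add_sub_cancel' hjn, hXn, sub_zero]
  have hcsum : (∑ k ∈ range n, c k) = 1 := by
    have swap : (∑ j ∈ Ico 0 n, ∑ k ∈ Ico j n, d k * y j)
        = ∑ k ∈ Ico 0 n, ∑ j ∈ Ico 0 (k + 1), d k * y j :=
      Finset.sum_Ico_Ico_comm 0 n (fun j k => d k * y j)
    calc (∑ k ∈ range n, c k) = ∑ k ∈ range n, ∑ j ∈ range (k + 1), d k * y j := by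
          refine Finset.sum_congr rfl fun k _ => ?_
          simp only [hcdef, hYdef, Finset.mul_sum]
      _ = ∑ j ∈ range n, (∑ k ∈ Ico j n, d k) * y j := by
          simp only [Finset.range_eq_Ico]
          rw [← swap]
          refine Finset.sum_congr rfl fun j _ => ?_
          rw [Finset.sum_mul]
      _ = ∑ j ∈ range n, x j * y j := by
          refine Finset.sum_congr rfl fun j hj => ?_
          rw [htel j (mem_range.mp hj).le, hXdef]
          simp [mem_range.mp hj]
      _ = 1 := hsum
  have hrep : ∀ j, j < n → x j = ∑ k ∈ range n, c k * u k j := by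
    intro j hjn
    rw [← Finset.sum_range_add_sum_Ico _ hjn.le]
    have h1 : (∑ k ∈ range j, c k * u k j) = 0 := by
      refine Finset.sum_eq_zero fun k hk => ?_
      have : ¬ j < k + 1 := by have := mem_range.mp hk; omega
      simp only [hudef]
      rw [if_neg this, mul_zero]
    have h2 : (∑ k ∈ Ico j n, c k * u k j) = ∑ k ∈ Ico j n, d k := by
      refine Finset.sum_congr rfl fun k hk => ?_
      obtain ⟨hjk, hkn⟩ := mem_Ico.mp hk
      simp only [hudef, hcdef]
      rw [if_pos (by omega), mul_assoc,
        mul_inv_cancel₀ (hY (k + 1) (by omega) (by omega)).ne', mul_one]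
    rw [h1, h2, zero_add, htel j hjn.le, hXdef]
    simp [hjn]
  have hu0 : ∀ k j, k < n → 0 ≤ u k j := by
    intro k j hkn
    simp only [hudef]
    split
    · exact inv_nonneg.mpr (hY (k + 1) (by omega) (by omega)).le
    · exact le_refl 0
  have hMk : ∀ k, k < n → Z (k + 1) * Y (k + 1) ^ (-q) ≤ M :=
    fun k hk => Finset.le_sup' (f := fun k => Z k * Y k ^ (-q))
      (Finset.mem_Icc.mpr ⟨by omega, by omega⟩)
  calc (∑ j ∈ range n, x j ^ q * z j)
      ≤ ∑ j ∈ range n, (∑ k ∈ range n, c k * u k j ^ q) * z j := by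
        refine Finset.sum_le_sum fun j hj => ?_
        have hjn := mem_range.mp hj
        refine mul_le_mul_of_nonneg_right ?_ (hz j hjn).le
        rw [hrep j hjn]
        exact Real.rpow_arith_mean_le_arith_mean_rpow (range n) c (fun k => u k j)
          (fun k hk => hc0 k (mem_range.mp hk)) hcsum (fun k hk => hu0 k j (mem_range.mp hk)) hq.le
    _ = ∑ k ∈ range n, c k * ∑ j ∈ range n, u k j ^ q * z j := by
        simp_rw [Finset.sum_mul, Finset.mul_sum]
        rw [Finset.sum_comm]
        refine Finset.sum_congr rfl fun k _ => Finset.sum_congr rfl fun j _ => by ring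
    _ = ∑ k ∈ range n, c k * (Z (k + 1) * Y (k + 1) ^ (-q)) := by
        refine Finset.sum_congr rfl fun k hk => ?_
        have hkn := mem_range.mp hk
        rw [mul_eq_mul_left_iff]
        left
        simp only [hudef]
        exact step_sum (k + 1) (by omega) (by omega)
    _ ≤ ∑ k ∈ range n, c k * M := by
        refine Finset.sum_le_sum fun k hk => ?_
        exact mul_le_mul_of_nonneg_left (hMk k (mem_range.mp hk)) (hc0 k (mem_range.mp hk))
    _ = M := by rw [← Finset.sum_mul, hcsum, one_mul]
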